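/- Let A and C be commuting symmetric positive-definite d×d real matrices and set Ā_t := A e^{−t} + C(1−e^{−t}) for t ≥ 0. Then for every t ≥ 0, ‖A Ā_t⁻¹‖ ≤ max{1, ‖A C⁻¹‖} and e^t ‖I − C Ā_t⁻¹‖ ≤ max{‖I − C A⁻¹‖, ‖A C⁻¹ − I‖}. (The interpolation-matrix estimates defining the constants K and L₂ used throughout the convergence analysis.) -/

import Mathlib

open Matrix

noncomputable section

/-- The operator (`ℓ²`-to-`ℓ²`) norm of a real matrix. -/
def matNorm {d : ℕ} (M : Matrix (Fin d) (Fin d) ℝ) : ℝ :=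
  ‖Matrix.toEuclideanCLM (𝕜 := ℝ) M‖

open scoped Matrix.Norms.L2Operator

lemma matNorm_eq {d : ℕ} (M : Matrix (Fin d) (Fin d) ℝ) : matNorm M = ‖M‖ := rfl

lemma norm_conj {d : ℕ} (U : Matrix.unitaryGroup (Fin d) ℝ) (B : Matrix (Fin d) (Fin d) ℝ) :
    ‖(U : Matrix (Fin d) (Fin d) ℝ) * B * star (U : Matrix (Fin d) (Fin d) ℝ)‖ = ‖B‖ := by
  rw [mul_assoc, ← Unitary.coe_star]
  rw [CStarRing.norm_coe_unitary_mul U (B * (star U : Matrix.unitaryGroup (Fin d) ℝ))]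
  exact CStarRing.norm_mul_coe_unitary B _

lemma norm_diagonal_ge {d : ℕ} (v : Fin d → ℝ) (i : Fin d) : |v i| ≤ ‖diagonal v‖ := by
  have h := (Matrix.toEuclideanCLM (𝕜 := ℝ) (diagonal v)).le_opNorm (EuclideanSpace.single i 1)
  have e1 : (Matrix.toEuclideanCLM (𝕜 := ℝ) (diagonal v)) (EuclideanSpace.single i 1) =
      EuclideanSpace.single i (v i) := by
    rw [← EuclideanSpace.toLp_single, ← EuclideanSpace.toLp_single,
      Matrix.toEuclideanCLM_toLp, Matrix.diagonal_mulVec_single,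
      mul_one]
  rw [e1, EuclideanSpace.norm_single, EuclideanSpace.norm_single, norm_one, mul_one] at h
  exact h

lemma norm_diagonal_le {d : ℕ} (v : Fin d → ℝ) {μ : ℝ} (hμ : 0 ≤ μ) (h : ∀ i, |v i| ≤ μ) :
    ‖diagonal v‖ ≤ μ := by
  rw [Matrix.cstar_norm_def]
  refine ContinuousLinearMap.opNorm_le_bound _ hμ fun x => ?_
  have hentry : ∀ j, (Matrix.toEuclideanCLM (𝕜 := ℝ) (diagonal v) x) j = v j * x j := by
    intro j
    have := congrFun (congrArg (fun z => (z : Fin d → ℝ))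
      (Matrix.ofLp_toEuclideanCLM (𝕜 := ℝ) (diagonal v) x)) j
    simpa [Matrix.toLin'_apply, Matrix.mulVec_diagonal] using this
  rw [EuclideanSpace.norm_eq, EuclideanSpace.norm_eq]
  rw [show μ * Real.sqrt (∑ j, ‖x j‖ ^ 2) = Real.sqrt (μ ^ 2 * ∑ j, ‖x j‖ ^ 2) by
    rw [Real.sqrt_mul (sq_nonneg μ), Real.sqrt_sq hμ]]
  apply Real.sqrt_le_sqrt
  rw [Finset.mul_sum]
  apply Finset.sum_le_sum
  intro j _
  rw [hentry j]
  have h1 : ‖v j * x j‖ ≤ μ * ‖x j‖ := by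
    rw [norm_mul]
    exact mul_le_mul_of_nonneg_right (h j) (norm_nonneg _)
  calc ‖v j * x j‖ ^ 2 ≤ (μ * ‖x j‖) ^ 2 := by
        apply pow_le_pow_left₀ (norm_nonneg _) h1
    _ = μ ^ 2 * ‖x j‖ ^ 2 := by ring

lemma conj_mul' {d : ℕ} (U : Matrix.unitaryGroup (Fin d) ℝ) (X Y : Matrix (Fin d) (Fin d) ℝ) :
    ((U : Matrix (Fin d) (Fin d) ℝ) * X * star (U : Matrix (Fin d) (Fin d) ℝ)) *
      ((U : Matrix (Fin d) (Fin d) ℝ) * Y * star (U : Matrix (Fin d) (Fin d) ℝ)) =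
    (U : Matrix (Fin d) (Fin d) ℝ) * (X * Y) * star (U : Matrix (Fin d) (Fin d) ℝ) := by
  have h : star (U : Matrix (Fin d) (Fin d) ℝ) * (U : Matrix (Fin d) (Fin d) ℝ) = 1 :=
    Matrix.mem_unitaryGroup_iff'.mp U.2
  calc ((U : Matrix (Fin d) (Fin d) ℝ) * X * star (U : Matrix (Fin d) (Fin d) ℝ)) *
      ((U : Matrix (Fin d) (Fin d) ℝ) * Y * star (U : Matrix (Fin d) (Fin d) ℝ))
      = (U : Matrix (Fin d) (Fin d) ℝ) * X *
        ((star (U : Matrix (Fin d) (Fin d) ℝ) * (U : Matrix (Fin d) (Fin d) ℝ)) *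
          (Y * star (U : Matrix (Fin d) (Fin d) ℝ))) := by simp only [mul_assoc]
    _ = (U : Matrix (Fin d) (Fin d) ℝ) * (X * Y) * star (U : Matrix (Fin d) (Fin d) ℝ) := by
        rw [h, one_mul]; simp only [mul_assoc]

lemma scalar1 {s v nv : ℝ} (hs0 : 0 < s) (hs1 : s ≤ 1) (hv : 0 < v) (hnv : v⁻¹ ≤ nv) :
    |(s + (1 - s) * v)⁻¹| ≤ max 1 nv := by
  have hp : 0 < s + (1 - s) * v := by nlinarith
  rw [abs_of_nonneg (le_of_lt (inv_pos.2 hp))]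
  rcases le_or_gt 1 v with h | h
  · refine le_max_of_le_left ?_
    rw [inv_le_one_iff₀]; right; nlinarith
  · refine le_max_of_le_right (le_trans ?_ hnv)
    rw [inv_le_inv₀ hp hv]; nlinarith

lemma scalar2 {s v : ℝ} (hs0 : 0 < s) (hs1 : s ≤ 1) (hv : 0 < v) :
    |(s + (1 - s) * v)⁻¹ * (1 - v)| ≤ max |1 - v| |v⁻¹ - 1| := by
  have hp : 0 < s + (1 - s) * v := by nlinarith
  rw [abs_mul, abs_of_nonneg (le_of_lt (inv_pos.2 hp))]
  rcases le_or_gt v 1 with h | h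
  · refine le_max_of_le_right ?_
    have h1 : |1 - v| = 1 - v := abs_of_nonneg (by linarith)
    have h2 : |v⁻¹ - 1| = (1 - v) / v := by
      rw [abs_of_nonneg]
      · field_simp
      · have hvi : 0 < v⁻¹ := inv_pos.2 hv
        nlinarith [mul_inv_cancel₀ hv.ne']
    rw [h1, h2, inv_mul_eq_div, div_le_div_iff₀ hp hv]
    nlinarith [mul_nonneg hs0.le (sq_nonneg (1 - v))]
  · refine le_max_of_le_left ?_
    have h1 : |1 - v| = v - 1 := by rw [abs_sub_comm, abs_of_nonneg (by linarith)]
    rw [h1, inv_mul_eq_div, div_le_iff₀ hp]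
    nlinarith [mul_nonneg (by linarith : (0:ℝ) ≤ 1 - s) (sq_nonneg (v - 1))]

/-- The interpolation-matrix estimates defining the constants `K` and `L₂`. -/
theorem stmt8 {d : ℕ}
    (A C : Matrix (Fin d) (Fin d) ℝ) (hA : A.PosDef) (hC : C.PosDef)
    (hcomm : A * C = C * A) (t : ℝ) (ht : 0 ≤ t) :
    matNorm (A * (Real.exp (-t) • A + (1 - Real.exp (-t)) • C)⁻¹)
        ≤ max 1 (matNorm (A * C⁻¹)) ∧
    Real.exp t * matNorm (1 - C * (Real.exp (-t) • A + (1 - Real.exp (-t)) • C)⁻¹)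
        ≤ max (matNorm (1 - C * A⁻¹)) (matNorm (A * C⁻¹ - 1)) := by
  classical
  have hAdet : IsUnit A.det := isUnit_iff_ne_zero.2 hA.det_pos.ne'
  have hCdet : IsUnit C.det := isUnit_iff_ne_zero.2 hC.det_pos.ne'
  have hA1 : A * A⁻¹ = 1 := Matrix.mul_nonsing_inv A hAdet
  have hA2 : A⁻¹ * A = 1 := Matrix.nonsing_inv_mul A hAdet
  set s := Real.exp (-t) with hs_def
  have hs0 : 0 < s := Real.exp_pos _
  have hs1 : s ≤ 1 := by
    rw [hs_def, ← Real.exp_zero]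
    exact Real.exp_le_exp.mpr (by linarith)
  -- commutation of inverses
  have hCAinv : C * A⁻¹ = A⁻¹ * C := by
    calc C * A⁻¹ = A⁻¹ * (A * C) * A⁻¹ := by
          rw [Matrix.nonsing_inv_mul_cancel_left _ _ hAdet]
      _ = A⁻¹ * (C * A) * A⁻¹ := by rw [hcomm]
      _ = A⁻¹ * C := by rw [mul_assoc, Matrix.mul_nonsing_inv_cancel_right _ _ hAdet]
  have hACinv : A * C⁻¹ = C⁻¹ * A := by
    calc A * C⁻¹ = C⁻¹ * (C * A) * C⁻¹ := by
          rw [Matrix.nonsing_inv_mul_cancel_left _ _ hCdet]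
      _ = C⁻¹ * (A * C) * C⁻¹ := by rw [← hcomm]
      _ = C⁻¹ * A := by rw [mul_assoc, Matrix.mul_nonsing_inv_cancel_right _ _ hCdet]
  set M : Matrix (Fin d) (Fin d) ℝ := A⁻¹ * C with hM_def
  have hMh : M.IsHermitian := by
    rw [hM_def, Matrix.IsHermitian, conjTranspose_mul, hC.1, hA.1.inv]
    exact hCAinv
  set U := hMh.eigenvectorUnitary with hU_def
  set v := hMh.eigenvalues with hv_def
  have hUU : (U : Matrix (Fin d) (Fin d) ℝ) * star (U : Matrix (Fin d) (Fin d) ℝ) = 1 :=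
    Matrix.mem_unitaryGroup_iff.mp U.2
  have hspec : M = (U : Matrix (Fin d) (Fin d) ℝ) * diagonal v *
      star (U : Matrix (Fin d) (Fin d) ℝ) := by
    have h := hMh.spectral_theorem
    rw [RCLike.ofReal_real_eq_id, Function.id_comp] at h
    exact h
  -- positivity of eigenvalues
  have hAM : A * M = C := by rw [hM_def]; exact Matrix.mul_nonsing_inv_cancel_left _ _ hAdet
  have hv : ∀ i, 0 < v i := by
    intro i
    set x : Fin d → ℝ := ⇑(hMh.eigenvectorBasis i) with hx_def
    have hx0 : x ≠ 0 := by
      have h0 := hMh.eigenvectorBasis.orthonormal.ne_zero i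
      intro hc
      exact h0 (by ext j; exact congrFun hc j)
    have hMx : M *ᵥ x = v i • x := hMh.mulVec_eigenvectorBasis i
    have hCx : C *ᵥ x = v i • (A *ᵥ x) := by
      have h1 := congrArg (fun y => A *ᵥ y) hMx
      simp only [Matrix.mulVec_mulVec, Matrix.mulVec_smul] at h1
      rwa [hAM] at h1
    have hCpos := hC.dotProduct_mulVec_pos hx0
    have hApos := hA.dotProduct_mulVec_pos hx0
    rw [star_trivial] at hCpos hApos
    have h2 : dotProduct x (C *ᵥ x) = v i * dotProduct x (A *ᵥ x) := by
      rw [hCx, dotProduct_smul, smul_eq_mul]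
    nlinarith
  -- the interpolation matrix
  set p : Fin d → ℝ := fun i => s + (1 - s) * v i with hp_def
  have hp : ∀ i, 0 < p i := fun i => by have := hv i; simp only [hp_def]; nlinarith
  set Pm : Matrix (Fin d) (Fin d) ℝ := s • 1 + (1 - s) • M with hPm_def
  have hPmdiag : (U : Matrix (Fin d) (Fin d) ℝ) * diagonal p *
      star (U : Matrix (Fin d) (Fin d) ℝ) = Pm := by
    have hd : diagonal p = s • (1 : Matrix (Fin d) (Fin d) ℝ) + (1 - s) • diagonal v := by
      funext i j
      rcases eq_or_ne i j with rfl | hij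
      · simp [hp_def]
      · simp [Matrix.diagonal_apply_ne _ hij, Matrix.one_apply_ne hij]
    rw [hd, Matrix.mul_add, Matrix.add_mul]
    simp only [mul_smul_comm, smul_mul_assoc, mul_one]
    rw [hUU, ← hspec, hPm_def]
  have hinv_conj : ∀ (w : Fin d → ℝ), (∀ i, w i ≠ 0) →
      ((U : Matrix (Fin d) (Fin d) ℝ) * diagonal w * star (U : Matrix (Fin d) (Fin d) ℝ))⁻¹ =
        (U : Matrix (Fin d) (Fin d) ℝ) * diagonal w⁻¹ *
          star (U : Matrix (Fin d) (Fin d) ℝ) := by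
    intro w hw
    apply Matrix.inv_eq_right_inv
    rw [conj_mul' U, diagonal_mul_diagonal,
      show (fun i => w i * w⁻¹ i) = (fun _ => (1 : ℝ)) from
        funext fun i => by simp [mul_inv_cancel₀ (hw i)],
      diagonal_one, mul_one, hUU]
  have hPminv : Pm⁻¹ = (U : Matrix (Fin d) (Fin d) ℝ) * diagonal p⁻¹ *
      star (U : Matrix (Fin d) (Fin d) ℝ) := by
    rw [← hPmdiag]
    exact hinv_conj p (fun i => (hp i).ne')
  have hPm1 : Pm * Pm⁻¹ = 1 := by
    rw [hPminv, ← hPmdiag, conj_mul', diagonal_mul_diagonal,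
      show (fun i => p i * p⁻¹ i) = (fun _ => (1 : ℝ)) from
        funext fun i => by simp [mul_inv_cancel₀ (hp i).ne'],
      diagonal_one, mul_one, hUU]
  have hPm2 : Pm⁻¹ * Pm = 1 := mul_eq_one_comm.mp hPm1
  -- commutation with Pm⁻¹
  have hMA : M * A = C := by
    calc M * A = A⁻¹ * (C * A) := by rw [hM_def, mul_assoc]
      _ = A⁻¹ * (A * C) := by rw [hcomm]
      _ = C := Matrix.nonsing_inv_mul_cancel_left _ _ hAdet
  have hCM : C * M = M * C := by
    calc C * M = C * A⁻¹ * C := by rw [hM_def, mul_assoc]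
      _ = M * C := by rw [hCAinv, hM_def]
  have hAPm : A * Pm = Pm * A := by
    rw [hPm_def, Matrix.mul_add, Matrix.add_mul]
    simp only [mul_smul_comm, smul_mul_assoc, mul_one, one_mul, hAM, hMA]
  have hCPm : C * Pm = Pm * C := by
    rw [hPm_def, Matrix.mul_add, Matrix.add_mul]
    simp only [mul_smul_comm, smul_mul_assoc, mul_one, one_mul, hCM]
  have hAPminv : A * Pm⁻¹ = Pm⁻¹ * A := by
    calc A * Pm⁻¹ = Pm⁻¹ * (Pm * A) * Pm⁻¹ := by rw [← mul_assoc, hPm2, one_mul]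
      _ = Pm⁻¹ * (A * Pm) * Pm⁻¹ := by rw [hAPm]
      _ = Pm⁻¹ * A := by rw [mul_assoc, mul_assoc, hPm1, mul_one]
  have hCPminv : C * Pm⁻¹ = Pm⁻¹ * C := by
    calc C * Pm⁻¹ = Pm⁻¹ * (Pm * C) * Pm⁻¹ := by rw [← mul_assoc, hPm2, one_mul]
      _ = Pm⁻¹ * (C * Pm) * Pm⁻¹ := by rw [hCPm]
      _ = Pm⁻¹ * C := by rw [mul_assoc, mul_assoc, hPm1, mul_one]
  -- the interpolation matrix equals A * Pm
  have hQ : s • A + (1 - s) • C = A * Pm := by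
    rw [hPm_def, Matrix.mul_add]
    simp only [mul_smul_comm, mul_one, hAM]
  -- representation of the target matrices
  have hT1 : A * (s • A + (1 - s) • C)⁻¹ = (U : Matrix (Fin d) (Fin d) ℝ) * diagonal p⁻¹ *
      star (U : Matrix (Fin d) (Fin d) ℝ) := by
    rw [hQ, Matrix.mul_inv_rev, ← mul_assoc, hAPminv, mul_assoc, hA1, mul_one, hPminv]
  have hACi : A * C⁻¹ = M⁻¹ := by
    rw [hM_def, Matrix.mul_inv_rev, Matrix.nonsing_inv_nonsing_inv A hAdet]
    exact hACinv
  have hACidiag : A * C⁻¹ = (U : Matrix (Fin d) (Fin d) ℝ) * diagonal v⁻¹ *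
      star (U : Matrix (Fin d) (Fin d) ℝ) := by
    rw [hACi, hspec]
    exact hinv_conj v (fun i => (hv i).ne')
  have h1M : (1 : Matrix (Fin d) (Fin d) ℝ) - M = (U : Matrix (Fin d) (Fin d) ℝ) *
      diagonal (fun i => 1 - v i) * star (U : Matrix (Fin d) (Fin d) ℝ) := by
    have hd : diagonal (fun i => 1 - v i) = (1 : Matrix (Fin d) (Fin d) ℝ) - diagonal v := by
      rw [← Matrix.diagonal_one, Matrix.diagonal_sub]
    rw [hd, Matrix.mul_sub, Matrix.sub_mul, mul_one, hUU, ← hspec]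
  have h4 : (1 : Matrix (Fin d) (Fin d) ℝ) - C * A⁻¹ = (U : Matrix (Fin d) (Fin d) ℝ) *
      diagonal (fun i => 1 - v i) * star (U : Matrix (Fin d) (Fin d) ℝ) := by
    rw [hCAinv]
    exact h1M
  have h5 : A * C⁻¹ - 1 = (U : Matrix (Fin d) (Fin d) ℝ) *
      diagonal (fun i => (v i)⁻¹ - 1) * star (U : Matrix (Fin d) (Fin d) ℝ) := by
    have hd : diagonal (fun i => (v i)⁻¹ - 1) =
        diagonal v⁻¹ - (1 : Matrix (Fin d) (Fin d) ℝ) := by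
      rw [← Matrix.diagonal_one, Matrix.diagonal_sub]
      rfl
    rw [hACidiag, hd, Matrix.mul_sub, Matrix.sub_mul, mul_one, hUU]
  have hT2 : (1 : Matrix (Fin d) (Fin d) ℝ) - C * (s • A + (1 - s) • C)⁻¹ =
      s • ((U : Matrix (Fin d) (Fin d) ℝ) * diagonal (fun i => (p i)⁻¹ * (1 - v i)) *
        star (U : Matrix (Fin d) (Fin d) ℝ)) := by
    rw [hQ, Matrix.mul_inv_rev, ← mul_assoc, hCPminv, mul_assoc, hCAinv]
    have hPmM : Pm - M = s • ((1 : Matrix (Fin d) (Fin d) ℝ) - M) := by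
      rw [hPm_def]; module
    calc (1 : Matrix (Fin d) (Fin d) ℝ) - Pm⁻¹ * M = Pm⁻¹ * (Pm - M) := by
          rw [Matrix.mul_sub, hPm2]
      _ = s • (Pm⁻¹ * ((1 : Matrix (Fin d) (Fin d) ℝ) - M)) := by rw [hPmM, mul_smul_comm]
      _ = s • ((U : Matrix (Fin d) (Fin d) ℝ) * diagonal (fun i => (p i)⁻¹ * (1 - v i)) *
            star (U : Matrix (Fin d) (Fin d) ℝ)) := by
          rw [hPminv, h1M, conj_mul', diagonal_mul_diagonal]
          rfl
  constructor
  · rw [matNorm_eq, matNorm_eq, hT1, hACidiag, norm_conj, norm_conj]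
    apply norm_diagonal_le _ (le_trans zero_le_one (le_max_left _ _))
    intro i
    have hlow : (v i)⁻¹ ≤ ‖diagonal v⁻¹‖ := by
      have h := norm_diagonal_ge v⁻¹ i
      rwa [Pi.inv_apply, abs_of_pos (inv_pos.2 (hv i))] at h
    have h := scalar1 hs0 hs1 (hv i) hlow
    simp only [Pi.inv_apply, hp_def]
    exact h
  · rw [matNorm_eq, matNorm_eq, matNorm_eq, hT2, h4, h5, norm_smul, norm_conj, norm_conj,
      norm_conj, Real.norm_eq_abs, abs_of_pos hs0, ← mul_assoc]
    have hts : Real.exp t * s = 1 := by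
      rw [hs_def, ← Real.exp_add, add_neg_cancel, Real.exp_zero]
    rw [hts, one_mul]
    apply norm_diagonal_le _ (le_trans (norm_nonneg _) (le_max_left _ _))
    intro i
    have hl1 := norm_diagonal_ge (fun j => 1 - v j) i
    have hl2 := norm_diagonal_ge (fun j => (v j)⁻¹ - 1) i
    have hm : |(p i)⁻¹ * (1 - v i)| ≤ max |1 - v i| |(v i)⁻¹ - 1| := by
      simpa [hp_def] using scalar2 hs0 hs1 (hv i)
    exact hm.trans (max_le_max hl1 hl2)
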